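/- Let K : ℓ² → H be a bounded linear injective operator into a real Hilbert space H, f ∈ H, and w_k ≥ w_0 > 0. Then the functional Ψ(u) = ½‖Ku - f‖²_H + ∑_k w_k|u_k| has a unique minimizer over ℓ² (where Ψ(u) = +∞ if the sum diverges). -/

import Mathlib

open scoped ENNReal
open Filter Topology


lemma aux_lsc_min {X : Type*} [TopologicalSpace X] [FirstCountableTopology X]
    {s : Set X} (hs : IsCompact s) (hne : s.Nonempty) {F : X → ℝ≥0∞}
    (hF : LowerSemicontinuousOn F s) : ∃ x ∈ s, ∀ y ∈ s, F x ≤ F y := by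
  set m := sInf (F '' s) with hm
  have hms : ∀ y ∈ s, m ≤ F y := fun y hy => sInf_le ⟨y, hy, rfl⟩
  rcases eq_or_ne m ⊤ with htop | hlt
  · obtain ⟨x, hx⟩ := hne
    refine ⟨x, hx, fun y hy => ?_⟩
    have h := hms y hy; rw [htop, top_le_iff] at h; simp [h]
  · -- choose minimizing sequence
    have hseq : ∀ n : ℕ, ∃ x ∈ s, F x < m + 1 / (n + 1) := by
      intro n
      have hlt' : m < m + 1 / (n + 1) := by
        apply ENNReal.lt_add_right hlt
        simp [ENNReal.div_eq_zero_iff]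
      obtain ⟨v, ⟨x, hx, rfl⟩, hv⟩ := sInf_lt_iff.mp (hm ▸ hlt' : sInf (F '' s) < _)
      exact ⟨x, hx, hv⟩
    choose u hu hFu using hseq
    obtain ⟨x, hx, φ, hφ, hconv⟩ := hs.tendsto_subseq hu
    refine ⟨x, hx, fun y hy => le_trans ?_ (hms y hy)⟩
    by_contra hcon
    push_neg at hcon
    obtain ⟨b, hmb, hbF⟩ := exists_between hcon
    have hev := hF x hx b hbF
    have htend : Tendsto (u ∘ φ) atTop (𝓝[s] x) :=
      tendsto_nhdsWithin_of_tendsto_nhds_of_eventually_within _ hconv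
        (Eventually.of_forall fun n => hu (φ n))
    have h1 : ∀ᶠ n in atTop, b < F (u (φ n)) := htend.eventually hev
    have h2 : ∀ᶠ n in atTop, b < m + 1 / (φ n + 1) :=
      h1.mono fun n hn => hn.trans (hFu (φ n))
    have h3 : Tendsto (fun n => m + 1 / ((φ n : ℝ≥0∞) + 1)) atTop (𝓝 (m + 0)) := by
      apply Tendsto.const_add
      have h0 : Tendsto (fun n : ℕ => (1 : ℝ≥0∞) / (n + 1)) atTop (𝓝 0) := by
        simp only [one_div]
        rw [← ENNReal.inv_top]
        apply ENNReal.tendsto_inv_iff.2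
        have h := ENNReal.tendsto_nat_nhds_top.comp (tendsto_add_atTop_nat 1)
        convert h using 2 with n
        simp only [Function.comp_apply]
        push_cast
        ring
      exact h0.comp hφ.tendsto_atTop
    rw [add_zero] at h3
    have : b ≤ m := ge_of_tendsto h3 (h2.mono fun n hn => hn.le)
    exact absurd this (not_le.mpr hmb)

lemma aux_sup_formula {H : Type*} [NormedAddCommGroup H] [InnerProductSpace ℝ H] (x : H) :
    ⨆ y : {y : H // ‖y‖ ≤ 1}, ENNReal.ofReal ((max (inner ℝ x y.1 : ℝ) 0) ^ 2 / 2)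
      = ENNReal.ofReal (‖x‖ ^ 2 / 2) := by
  apply le_antisymm
  · apply iSup_le
    rintro ⟨y, hy⟩
    apply ENNReal.ofReal_le_ofReal
    have h1 : (inner ℝ x y : ℝ) ≤ ‖x‖ := by
      calc (inner ℝ x y : ℝ) ≤ ‖x‖ * ‖y‖ := real_inner_le_norm x y
        _ ≤ ‖x‖ * 1 := by nlinarith [norm_nonneg x]
        _ = ‖x‖ := mul_one _
    have h2 : max (inner ℝ x y : ℝ) 0 ≤ ‖x‖ := max_le h1 (norm_nonneg x)
    have h3 : 0 ≤ max (inner ℝ x y : ℝ) 0 := le_max_right _ _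
    nlinarith
  · rcases eq_or_ne x 0 with rfl | hx
    · simp
    · have hnx : 0 < ‖x‖ := norm_pos_iff.mpr hx
      have hy : ‖(‖x‖⁻¹ • x)‖ ≤ 1 := by
        rw [norm_smul, norm_inv, norm_norm, inv_mul_cancel₀ hnx.ne']
      have hinner : (inner ℝ x (‖x‖⁻¹ • x) : ℝ) = ‖x‖ := by
        rw [real_inner_smul_right, real_inner_self_eq_norm_sq]
        field_simp
      have hle := le_iSup (fun y : {y : H // ‖y‖ ≤ 1} =>
        ENNReal.ofReal ((max (inner ℝ x y.1 : ℝ) 0) ^ 2 / 2)) ⟨_, hy⟩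
      simp only [hinner, max_eq_left hnx.le] at hle
      exact hle

lemma aux_cont_tsum {z : ℕ → ℝ} {B C : ℝ}
    (hz : Tendsto z atTop (𝓝 0)) (hB : ∀ k, |z k| ≤ B) {T : Set (ℕ → ℝ)}
    (hT : ∀ v ∈ T, ∀ s : Finset ℕ, ∑ k ∈ s, |v k| ≤ C) :
    ContinuousOn (fun v => ∑' k, v k * z k) T := by
  rcases T.eq_empty_or_nonempty with rfl | ⟨v₀, hv₀⟩
  · exact continuousOn_empty _
  have hC0 : 0 ≤ C := le_trans (by simp) (hT v₀ hv₀ ∅)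
  have hB0 : 0 ≤ B := le_trans (abs_nonneg _) (hB 0)
  -- summability facts on T
  have habs : ∀ v ∈ T, Summable fun k => |v k| := by
    intro v hv
    exact summable_of_sum_range_le (fun n => abs_nonneg _) (fun n => hT v hv (Finset.range n))
  have hmul : ∀ v ∈ T, Summable fun k => v k * z k := by
    intro v hv
    apply Summable.of_abs
    apply Summable.of_nonneg_of_le (fun k => abs_nonneg _) (fun k => ?_) ((habs v hv).mul_right B)
    rw [abs_mul]
    exact mul_le_mul_of_nonneg_left (hB k) (abs_nonneg _)
  -- uniform limit of partial sums
  apply TendstoUniformlyOn.continuousOn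
    (F := fun (n : ℕ) (v : ℕ → ℝ) => ∑ k ∈ Finset.range n, v k * z k) (p := atTop)
  · rw [Metric.tendstoUniformlyOn_iff]
    intro ε hε
    have hδ : 0 < ε / (2 * (C + 1)) := by positivity
    have hzev : ∀ᶠ k in atTop, |z k| ≤ ε / (2 * (C + 1)) := by
      have := hz.eventually (Metric.ball_mem_nhds (0 : ℝ) hδ)
      refine this.mono fun k hk => ?_
      simpa [Real.dist_eq] using le_of_lt hk
    obtain ⟨N₀, hN₀⟩ := eventually_atTop.mp hzev
    filter_upwards [eventually_ge_atTop N₀] with n hn v hv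
    have hsum := hmul v hv
    have hcompl : ∑ k ∈ Finset.range n, v k * z k + ∑' (k : ↑((Finset.range n : Finset ℕ) : Set ℕ)ᶜ), v ↑k * z ↑k
        = ∑' k, v k * z k := Summable.sum_add_tsum_compl hsum
    have heq : (∑' k, v k * z k) - ∑ k ∈ Finset.range n, v k * z k
        = ∑' (k : ↑((Finset.range n : Finset ℕ) : Set ℕ)ᶜ), v ↑k * z ↑k := by
      rw [← hcompl]; ring
    rw [Real.dist_eq, heq]
    have hsub : Summable fun k : ↑((Finset.range n : Finset ℕ) : Set ℕ)ᶜ => v ↑k * z ↑k :=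
      hsum.subtype _
    calc |∑' (k : ↑((Finset.range n : Finset ℕ) : Set ℕ)ᶜ), v ↑k * z ↑k|
        ≤ ∑' (k : ↑((Finset.range n : Finset ℕ) : Set ℕ)ᶜ), |v ↑k * z ↑k| := by
          simpa [abs_mul] using norm_tsum_le_tsum_norm (f := fun k : ↑((Finset.range n : Finset ℕ) : Set ℕ)ᶜ => v ↑k * z ↑k) hsub.abs
      _ ≤ ∑' (k : ↑((Finset.range n : Finset ℕ) : Set ℕ)ᶜ), (ε / (2 * (C + 1))) * |v ↑k| := by
          apply Summable.tsum_le_tsum _ hsub.abs (((habs v hv).subtype _).mul_left _)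
          rintro ⟨k, hk⟩
          have hkn : n ≤ k := by
            by_contra hlt
            exact hk (by simpa using Nat.lt_of_not_le hlt)
          calc |v k * z k| = |v k| * |z k| := abs_mul _ _
            _ ≤ |v k| * (ε / (2 * (C + 1))) :=
                mul_le_mul_of_nonneg_left (hN₀ k (le_trans hn hkn)) (abs_nonneg _)
            _ = (ε / (2 * (C + 1))) * |v k| := mul_comm _ _
      _ = (ε / (2 * (C + 1))) * ∑' (k : ↑((Finset.range n : Finset ℕ) : Set ℕ)ᶜ), |v ↑k| := by
          rw [tsum_mul_left]
      _ ≤ (ε / (2 * (C + 1))) * C := by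
          apply mul_le_mul_of_nonneg_left _ hδ.le
          calc ∑' (k : ↑((Finset.range n : Finset ℕ) : Set ℕ)ᶜ), |v ↑k|
              ≤ ∑' k, |v k| := Summable.tsum_subtype_le _ _ (fun k => abs_nonneg _) (habs v hv)
            _ ≤ C := Summable.tsum_le_of_sum_le (habs v hv) (hT v hv)
      _ < ε := by
          rw [div_mul_eq_mul_div, mul_comm]
          rw [div_lt_iff₀ (by positivity)]
          nlinarith
  · apply Frequently.of_forall
    intro n
    apply Continuous.continuousOn
    exact continuous_finset_sum _ fun k _ => (continuous_apply k).mul continuous_const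


/-- `ℓ²`: square-summable real sequences. -/
noncomputable abbrev ellTwo := lp (fun _ : ℕ => ℝ) 2

/-- The Tikhonov functional `Ψ(u) = ½‖Ku - f‖² + ∑_k w_k |u_k|`, with value `+∞`
when the penalty series diverges. -/
noncomputable def Psi {H : Type*} [NormedAddCommGroup H] [InnerProductSpace ℝ H]
    (K : ellTwo →L[ℝ] H) (f : H) (w : ℕ → ℝ) (u : ellTwo) : ℝ≥0∞ :=
  ENNReal.ofReal (‖K u - f‖ ^ 2 / 2) + ∑' k, ENNReal.ofReal (w k * |u k|)

/-- For `K : ℓ² → H` bounded linear and injective, `f ∈ H` and weights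
`w_k ≥ w_0 > 0`, the functional `Ψ` has a unique minimizer over `ℓ²`. -/
theorem stmt_10 {H : Type*} [NormedAddCommGroup H] [InnerProductSpace ℝ H]
    [CompleteSpace H]
    (K : ellTwo →L[ℝ] H) (hK : Function.Injective K) (f : H)
    (w : ℕ → ℝ) (w0 : ℝ) (hw0 : 0 < w0) (hw : ∀ k, w0 ≤ w k) :
    ∃! ubar : ellTwo, ∀ u : ellTwo, Psi K f w ubar ≤ Psi K f w u := by
  classical
  have hwpos : ∀ k, 0 < w k := fun k => hw0.trans_le (hw k)
  set R := Psi K f w 0 with hRdef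
  have hR0 : R = ENNReal.ofReal (‖f‖ ^ 2 / 2) := by
    simp [hRdef, Psi, lp.coeFn_zero]
  have hRtop : R ≠ ⊤ := by rw [hR0]; exact ENNReal.ofReal_ne_top
  set Pen := fun v : ℕ → ℝ => ∑' k, ENNReal.ofReal (w k * |v k|) with hPendef
  have hPen_lsc : LowerSemicontinuous Pen := by
    apply lowerSemicontinuous_tsum
    intro k
    exact (ENNReal.continuous_ofReal.comp
      (continuous_const.mul ((continuous_apply k).abs))).lowerSemicontinuous
  set T := {v : ℕ → ℝ | Pen v ≤ R} with hTdef
  have hPsi : ∀ u : ellTwo, Psi K f w u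
      = ENNReal.ofReal (‖K u - f‖ ^ 2 / 2) + Pen ↑u := fun u => rfl
  set C := R.toReal / w0 with hCdef
  have hC0 : 0 ≤ C := div_nonneg ENNReal.toReal_nonneg hw0.le
  have hfin_sum : ∀ v ∈ T, ∀ s : Finset ℕ, ∑ k ∈ s, |v k| ≤ C := by
    intro v hv s
    have h1 : ∑ k ∈ s, w k * |v k| ≤ R.toReal := by
      have hnn : ∀ k ∈ s, 0 ≤ w k * |v k| :=
        fun k _ => mul_nonneg (hwpos k).le (abs_nonneg _)
      have h2 : ENNReal.ofReal (∑ k ∈ s, w k * |v k|) ≤ R := by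
        rw [ENNReal.ofReal_sum_of_nonneg hnn]
        exact le_trans (Summable.sum_le_tsum s (fun k _ => zero_le) ENNReal.summable) hv
      calc ∑ k ∈ s, w k * |v k|
          = (ENNReal.ofReal (∑ k ∈ s, w k * |v k|)).toReal :=
            (ENNReal.toReal_ofReal (Finset.sum_nonneg hnn)).symm
        _ ≤ R.toReal := ENNReal.toReal_mono hRtop h2
    rw [hCdef, le_div_iff₀ hw0]
    calc (∑ k ∈ s, |v k|) * w0 = ∑ k ∈ s, |v k| * w0 := by rw [Finset.sum_mul]
      _ ≤ ∑ k ∈ s, w k * |v k| := by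
          apply Finset.sum_le_sum
          intro k _
          rw [mul_comm (w k)]
          exact mul_le_mul_of_nonneg_left (hw k) (abs_nonneg _)
      _ ≤ R.toReal := h1
  have hcoord : ∀ v ∈ T, ∀ k, |v k| ≤ C := by
    intro v hv k
    simpa using hfin_sum v hv {k}
  have hTsub : T ⊆ Set.pi Set.univ fun _ : ℕ => Set.Icc (-C) C := by
    intro v hv
    rw [Set.mem_pi]
    intro k _
    exact abs_le.mp (hcoord v hv k)
  have hTcl : IsClosed T := by
    have h := lowerSemicontinuous_iff_isClosed_preimage.mp hPen_lsc R
    exact h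
  have hTcomp : IsCompact T :=
    IsCompact.of_isClosed_subset (isCompact_univ_pi fun _ => isCompact_Icc) hTcl hTsub
  have h0T : (0 : ℕ → ℝ) ∈ T := by
    simp [hTdef, hPendef]
  have habs_sum : ∀ v ∈ T, Summable fun k => |v k| := fun v hv =>
    summable_of_sum_range_le (fun _ => abs_nonneg _) (fun n => hfin_sum v hv (Finset.range n))
  have hmem : ∀ v ∈ T, Memℓp v 2 := by
    intro v hv
    apply memℓp_gen
    have hsum : Summable fun k => C * |v k| := (habs_sum v hv).mul_left C
    apply Summable.of_nonneg_of_le (fun k => Real.rpow_nonneg (norm_nonneg _) _) _ hsum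
    intro k
    have he : ‖v k‖ ^ (2 : ℝ≥0∞).toReal = |v k| ^ (2 : ℕ) := by
      rw [ENNReal.toReal_ofNat, Real.norm_eq_abs, show ((2 : ℝ) = ((2 : ℕ) : ℝ)) by norm_num,
        Real.rpow_natCast]
    rw [he, pow_two]
    exact mul_le_mul_of_nonneg_right (hcoord v hv k) (abs_nonneg _)
  set A := ContinuousLinearMap.adjoint K with hAdef
  set g := fun (y : H) (v : ℕ → ℝ) => (∑' k, v k * (A y) k) - (inner ℝ f y : ℝ) with hgdef
  have hg : ∀ (y : H) (u : ellTwo), g y ↑u = (inner ℝ (K u - f) y : ℝ) := by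
    intro y u
    have h1 : (inner ℝ u (A y) : ℝ) = ∑' k, u k * (A y) k := by
      rw [lp.inner_eq_tsum]
      congr 1
      ext i; simp [mul_comm]
    have h2 : (inner ℝ u (A y) : ℝ) = (inner ℝ (K u) y : ℝ) :=
      ContinuousLinearMap.adjoint_inner_right K u y
    rw [hgdef]
    simp only [← h1, h2, inner_sub_left]
  set Q := fun v : ℕ → ℝ =>
    ⨆ y : {y : H // ‖y‖ ≤ 1}, ENNReal.ofReal ((max (g y.1 v) 0) ^ 2 / 2) with hQdef
  have hQu : ∀ u : ellTwo, Q ↑u = ENNReal.ofReal (‖K u - f‖ ^ 2 / 2) := by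
    intro u
    rw [hQdef]
    simp only [hg]
    exact aux_sup_formula (K u - f)
  have hQlsc : LowerSemicontinuousOn Q T := by
    intro x hx
    apply lowerSemicontinuousWithinAt_iSup
    intro y
    have hz : Tendsto (fun k => (A y.1) k) atTop (𝓝 0) := by
      have hsq : Summable fun k => ‖(A y.1) k‖ ^ (2 : ℝ≥0∞).toReal :=
        (memℓp_gen_iff (by norm_num : (0:ℝ) < (2 : ℝ≥0∞).toReal)).mp (lp.memℓp (A y.1))
      have hsq' : Summable fun k => |(A y.1) k| ^ (2 : ℕ) := by
        apply hsq.congr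
        intro k
        rw [ENNReal.toReal_ofNat, Real.norm_eq_abs, show ((2 : ℝ) = ((2 : ℕ) : ℝ)) by norm_num,
          Real.rpow_natCast]
      have h0 : Tendsto (fun k => |(A y.1) k| ^ (2 : ℕ)) atTop (𝓝 0) :=
        hsq'.tendsto_atTop_zero
      have h1 : Tendsto (fun k => |(A y.1) k|) atTop (𝓝 0) := by
        have := (Real.continuous_sqrt.tendsto 0).comp h0
        simp only [Real.sqrt_zero] at this
        apply this.congr
        intro k
        simp [Function.comp, Real.sqrt_sq_eq_abs, abs_abs]
      rw [show (fun k => (A y.1) k) = fun k => ((A y.1) k : ℝ) from rfl,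
        tendsto_zero_iff_norm_tendsto_zero]
      simpa [Real.norm_eq_abs] using h1
    have hB : ∀ k, |(A y.1) k| ≤ ‖A y.1‖ := by
      intro k
      have := lp.norm_apply_le_norm (by norm_num : (2 : ℝ≥0∞) ≠ 0) (A y.1) k
      simpa [Real.norm_eq_abs] using this
    have hgcont : ContinuousOn (g y.1) T := by
      rw [hgdef]
      exact (aux_cont_tsum hz hB hfin_sum).sub continuousOn_const
    have hterm : ContinuousWithinAt
        (fun v => ENNReal.ofReal ((max (g y.1 v) 0) ^ 2 / 2)) T x := by
      apply ENNReal.continuous_ofReal.continuousAt.comp_continuousWithinAt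
      exact (((hgcont x hx).max continuousWithinAt_const).pow 2).div_const 2
    exact hterm.lowerSemicontinuousWithinAt
  set F := fun v : ℕ → ℝ => Q v + Pen v with hFdef
  have hFlsc : LowerSemicontinuousOn F T := fun x hx =>
    (show LowerSemicontinuousWithinAt Q T x from hQlsc x hx).add
      ((hPen_lsc.lowerSemicontinuousAt x).lowerSemicontinuousWithinAt _)
  obtain ⟨vbar, hvbarT, hmin⟩ := aux_lsc_min hTcomp ⟨0, h0T⟩ hFlsc
  set ubar : ellTwo := ⟨vbar, hmem vbar hvbarT⟩ with hubardef
  have hFu : ∀ u : ellTwo, F ↑u = Psi K f w u := by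
    intro u
    rw [hFdef]
    simp only [hQu u, hPsi u]
  have hexists : ∀ u : ellTwo, Psi K f w ubar ≤ Psi K f w u := by
    intro u
    by_cases hu : Pen ↑u ≤ R
    · have h := hmin (↑u) hu
      rw [hFu u] at h
      rw [← hFu ubar] at *
      exact h
    · push_neg at hu
      calc Psi K f w ubar = F ↑ubar := (hFu ubar).symm
        _ ≤ F (0 : ℕ → ℝ) := hmin 0 h0T
        _ = Psi K f w 0 := by
            rw [← hFu 0, lp.coeFn_zero]
        _ = R := rfl
        _ ≤ Pen ↑u := hu.le
        _ ≤ Psi K f w u := by rw [hPsi u]; exact le_add_self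
  -- uniqueness
  have huniq : ∀ y₁ y₂ : ellTwo, (∀ u, Psi K f w y₁ ≤ Psi K f w u) →
      (∀ u, Psi K f w y₂ ≤ Psi K f w u) → y₁ = y₂ := by
    intro y₁ y₂ h₁ h₂
    by_contra hne
    have hfin : ∀ y : ellTwo, (∀ u, Psi K f w y ≤ Psi K f w u) → Psi K f w y ≠ ⊤ :=
      fun y hy => ne_top_of_le_ne_top hRtop (hy 0)
    have hpen : ∀ y : ellTwo, Psi K f w y ≠ ⊤ → Summable fun k => w k * |y k| := by
      intro y hy
      have h1 : Pen ↑y ≠ ⊤ := by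
        intro h
        apply hy
        rw [hPsi y, h, add_top]
      have h2 := ENNReal.summable_toReal h1
      apply h2.congr
      intro k
      exact ENNReal.toReal_ofReal (mul_nonneg (hwpos k).le (abs_nonneg _))
    have hs1 := hpen y₁ (hfin y₁ h₁)
    have hs2 := hpen y₂ (hfin y₂ h₂)
    have hPsiOf : ∀ y : ellTwo, Summable (fun k => w k * |y k|) →
        Psi K f w y = ENNReal.ofReal (‖K y - f‖ ^ 2 / 2 + ∑' k, w k * |y k|) := by
      intro y hs
      rw [hPsi y, hPendef, ENNReal.ofReal_add (by positivity)
        (tsum_nonneg fun k => mul_nonneg (hwpos k).le (abs_nonneg _)),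
        ENNReal.ofReal_tsum_of_nonneg (fun k => mul_nonneg (hwpos k).le (abs_nonneg _)) hs]
    set m : ellTwo := (2 : ℝ)⁻¹ • (y₁ + y₂) with hmdef
    have hmk : ∀ k, (m : ℕ → ℝ) k = (y₁ k + y₂ k) / 2 := by
      intro k
      rw [hmdef]
      rw [lp.coeFn_smul, lp.coeFn_add, Pi.smul_apply, Pi.add_apply, smul_eq_mul]
      ring
    have hptw : ∀ k, w k * |(m : ℕ → ℝ) k| ≤ (w k * |y₁ k| + w k * |y₂ k|) / 2 := by
      intro k
      rw [hmk k]
      have habs : |(y₁ k + y₂ k) / 2| ≤ (|y₁ k| + |y₂ k|) / 2 := by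
        rw [abs_div, abs_two]
        linarith [abs_add_le (y₁ k) (y₂ k)]
      calc w k * |(y₁ k + y₂ k) / 2| ≤ w k * ((|y₁ k| + |y₂ k|) / 2) :=
            mul_le_mul_of_nonneg_left habs (hwpos k).le
        _ = (w k * |y₁ k| + w k * |y₂ k|) / 2 := by ring
    have hsm : Summable fun k => w k * |(m : ℕ → ℝ) k| := by
      apply Summable.of_nonneg_of_le (fun k => mul_nonneg (hwpos k).le (abs_nonneg _)) hptw
      exact (hs1.add hs2).div_const 2
    have hPm : (∑' k, w k * |(m : ℕ → ℝ) k|)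
        ≤ ((∑' k, w k * |y₁ k|) + ∑' k, w k * |y₂ k|) / 2 := by
      calc (∑' k, w k * |(m : ℕ → ℝ) k|)
          ≤ ∑' k, (w k * |y₁ k| + w k * |y₂ k|) / 2 :=
            Summable.tsum_le_tsum hptw hsm ((hs1.add hs2).div_const 2)
        _ = ((∑' k, w k * |y₁ k|) + ∑' k, w k * |y₂ k|) / 2 := by
            rw [tsum_div_const, Summable.tsum_add hs1 hs2]
    have hKm : K m - f = (2 : ℝ)⁻¹ • ((K y₁ - f) + (K y₂ - f)) := by
      rw [hmdef, map_smul, map_add]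
      module
    have hnormm : ‖K m - f‖ ^ 2 = ‖(K y₁ - f) + (K y₂ - f)‖ ^ 2 / 4 := by
      rw [hKm, norm_smul, Real.norm_eq_abs, abs_of_pos (by norm_num : (0:ℝ) < 2⁻¹)]
      ring
    have hpar2 : ‖(K y₁ - f) + (K y₂ - f)‖ ^ 2 + ‖(K y₁ - f) - (K y₂ - f)‖ ^ 2
        = 2 * ‖K y₁ - f‖ ^ 2 + 2 * ‖K y₂ - f‖ ^ 2 := by
      have h := parallelogram_law_with_norm ℝ (K y₁ - f) (K y₂ - f)
      simp only [pow_two]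
      linarith
    have hd : 0 < ‖(K y₁ - f) - (K y₂ - f)‖ ^ 2 := by
      have heq : (K y₁ - f) - (K y₂ - f) = K (y₁ - y₂) := by
        rw [map_sub]; abel
      have hne0 : K (y₁ - y₂) ≠ 0 := by
        intro h
        apply hne
        have := hK (h.trans (map_zero K).symm)
        exact sub_eq_zero.mp this
      rw [heq]
      exact pow_pos (norm_pos_iff.mpr hne0) 2
    have hEq : Psi K f w y₁ = Psi K f w y₂ := le_antisymm (h₁ y₂) (h₂ y₁)
    have hnn1 : (0:ℝ) ≤ ‖K y₁ - f‖ ^ 2 / 2 + ∑' k, w k * |y₁ k| :=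
      add_nonneg (by positivity) (tsum_nonneg fun k => mul_nonneg (hwpos k).le (abs_nonneg _))
    have hnn2 : (0:ℝ) ≤ ‖K y₂ - f‖ ^ 2 / 2 + ∑' k, w k * |y₂ k| :=
      add_nonneg (by positivity) (tsum_nonneg fun k => mul_nonneg (hwpos k).le (abs_nonneg _))
    have hnnm : (0:ℝ) ≤ ‖K m - f‖ ^ 2 / 2 + ∑' k, w k * |(m : ℕ → ℝ) k| :=
      add_nonneg (by positivity) (tsum_nonneg fun k => mul_nonneg (hwpos k).le (abs_nonneg _))
    have hreal : ‖K y₁ - f‖ ^ 2 / 2 + ∑' k, w k * |y₁ k|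
        = ‖K y₂ - f‖ ^ 2 / 2 + ∑' k, w k * |y₂ k| := by
      rw [hPsiOf y₁ hs1, hPsiOf y₂ hs2] at hEq
      exact (ENNReal.ofReal_eq_ofReal_iff hnn1 hnn2).mp hEq
    have hlt : Psi K f w m < Psi K f w y₁ := by
      rw [hPsiOf m hsm, hPsiOf y₁ hs1]
      apply (ENNReal.ofReal_lt_ofReal_iff_of_nonneg hnnm).mpr
      linarith [hnormm, hpar2, hreal, hPm, hd]
    exact absurd (h₁ m) (not_le.mpr hlt)
  exact ⟨ubar, hexists, fun y hy => huniq y ubar hy hexists⟩
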